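/- Let H = U(h₃(ℝ))[[ℏ]] where h₃(ℝ) is the 3-dimensional Heisenberg Lie algebra with basis p, q, t, relations [p,q] = t and t central, with its standard Hopf algebra structure (p, q, t primitive). For θ, θ' ∈ ℏℂ[[ℏ]], set F_θ = exp(θ p⊗q) ∈ H⊗H. Then (Δ⊗id)(F_θ^{-1})·(F_{θ'}^{-1}⊗1) = (id⊗Δ)(F_{θ'}^{-1})·(1⊗F_θ^{-1})·Φ_{θ,θ'}, where Φ_{θ,θ'} = exp(−p⊗(θ−θ'−θθ't)⊗q) ∈ H⊗H⊗H. -/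

import Mathlib

open scoped TensorProduct

/-- `exp(u)` for a power series `u` over `B` (meaningful when `u` has zero constant term):
the `ℏ^N`-coefficient is `Σ_{k≤N} (1/k!)·(coefficient of ℏ^N in u^k)`. -/
noncomputable def pexp {B : Type*} [Ring B] [Algebra ℂ B] (u : PowerSeries B) :
    PowerSeries B :=
  PowerSeries.mk fun N => ∑ k ∈ Finset.range (N + 1),
    ((k.factorial : ℂ)⁻¹) • (PowerSeries.coeff N (u ^ k))

/-- Embedding of scalar formal power series `ℂ[[ℏ]]` into `B[[ℏ]]`. -/
noncomputable def embC {B : Type*} [Ring B] [Algebra ℂ B] (θ : PowerSeries ℂ) :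
    PowerSeries B :=
  PowerSeries.map (algebraMap ℂ B) θ

set_option linter.unusedSectionVars false
set_option linter.unusedVariables false
section Aux
open PowerSeries Finset

variable {B : Type*} [Ring B] [Algebra ℂ B]

/-- vanishing of low coefficients of a product -/
lemma ord_mul {a b : PowerSeries B} {m n N : ℕ}
    (ha : ∀ i < m, coeff i a = 0) (hb : ∀ j < n, coeff j b = 0) (hN : N < m + n) :
    coeff N (a * b) = 0 := by
  rw [coeff_mul]
  apply Finset.sum_eq_zero
  rintro ⟨i, j⟩ hij
  rw [Finset.HasAntidiagonal.mem_antidiagonal] at hij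
  rcases lt_or_ge i m with h | h
  · rw [ha i h, zero_mul]
  · rw [hb j (by omega), mul_zero]

lemma ord_pow {u : PowerSeries B} (hu : constantCoeff u = 0) :
    ∀ k : ℕ, ∀ i < k, coeff i (u ^ k) = 0 := by
  intro k
  induction k with
  | zero => intro i hi; omega
  | succ k ih =>
      intro i hi
      rw [pow_succ]
      exact ord_mul (m := k) (n := 1) ih (fun j hj => by
        obtain rfl : j = 0 := by omega
        simpa using hu) (by omega)

/-- truncation: coefficients of `pexp u` up to `N` agree with the truncated exponential sum. -/
lemma coeff_pexp_trunc {u : PowerSeries B} (hu : constantCoeff u = 0) {n N : ℕ} (h : n ≤ N) :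
    coeff n (pexp u) =
      coeff n (∑ k ∈ Finset.range (N + 1), ((k.factorial : ℂ)⁻¹) • u ^ k) := by
  rw [map_sum]
  simp only [coeff_smul]
  rw [pexp, coeff_mk]
  rw [← Finset.sum_subset (Finset.range_subset_range.2 (by omega) :
      Finset.range (n+1) ⊆ Finset.range (N+1))]
  intro k hk hk'
  rw [Finset.mem_range] at hk'
  rw [ord_pow hu k n (by omega), smul_zero]

/-- coefficient of a product only depends on low coefficients of each factor. -/
lemma coeff_mul_congr {x x' y y' : PowerSeries B} {N : ℕ}
    (hx : ∀ i ≤ N, coeff i x = coeff i x')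
    (hy : ∀ j ≤ N, coeff j y = coeff j y') :
    coeff N (x * y) = coeff N (x' * y') := by
  rw [coeff_mul, coeff_mul]
  apply Finset.sum_congr rfl
  rintro ⟨i, j⟩ hij
  rw [Finset.HasAntidiagonal.mem_antidiagonal] at hij
  rw [hx i (by omega), hy j (by omega)]

/-- expanding the left `pexp` factor in a coefficient of a product -/
lemma coeff_pexp_mul {u A : PowerSeries B} (hu : constantCoeff u = 0) (N : ℕ) :
    coeff N (pexp u * A) =
      ∑ k ∈ Finset.range (N + 1), ((k.factorial : ℂ)⁻¹) • coeff N (u ^ k * A) := by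
  rw [coeff_mul_congr (fun i hi => coeff_pexp_trunc hu hi) (fun j _ => rfl),
    Finset.sum_mul, map_sum]
  apply Finset.sum_congr rfl
  intro k _
  rw [smul_mul_assoc, coeff_smul]

/-- expanding the right `pexp` factor in a coefficient of a product -/
lemma coeff_mul_pexp {v A : PowerSeries B} (hv : constantCoeff v = 0) (N : ℕ) :
    coeff N (A * pexp v) =
      ∑ k ∈ Finset.range (N + 1), ((k.factorial : ℂ)⁻¹) • coeff N (A * v ^ k) := by
  rw [coeff_mul_congr (fun i _ => rfl) (fun j hj => coeff_pexp_trunc hv hj),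
    Finset.mul_sum, map_sum]
  apply Finset.sum_congr rfl
  intro k _
  rw [mul_smul_comm, coeff_smul]

lemma pow_mul_swap {u v w : PowerSeries B} (hc : u * w = w * u)
    (hw : u * v = v * u + w) :
    ∀ k : ℕ, u ^ (k + 1) * v = v * u ^ (k + 1) + (k + 1) • (w * u ^ k) := by
  intro k
  induction k with
  | zero => simpa using hw
  | succ k ih =>
      calc u ^ (k + 2) * v = u * (u ^ (k + 1) * v) := by
            rw [pow_succ' u (k+1), mul_assoc]
        _ = (v * u + w) * u ^ (k+1) + (k+1) • (w * u ^ (k+1)) := by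
            rw [ih, mul_add, mul_smul_comm, ← mul_assoc, hw, ← mul_assoc, hc,
              mul_assoc, ← pow_succ']
        _ = v * u ^ (k + 2) + (k + 2) • (w * u ^ (k+1)) := by
            rw [add_mul, mul_assoc, ← pow_succ', succ_nsmul (w * u ^ (k+1)) (k+1)]
            abel

lemma fact_inv_succ (i : ℕ) :
    (((i+1).factorial : ℂ))⁻¹ * ((i : ℂ) + 1) = ((i.factorial : ℂ))⁻¹ := by
  have h1 : ((i : ℂ) + 1) ≠ 0 := Nat.cast_add_one_ne_zero i
  rw [Nat.factorial_succ, Nat.cast_mul, mul_inv]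
  push_cast
  rw [mul_comm ((i:ℂ)+1)⁻¹, mul_assoc, mul_comm (↑i.factorial : ℂ)⁻¹,
    inv_mul_cancel₀ h1, one_mul]

/-- main commutation step: moving `v` across `pexp u` produces `v + w` where `w = [u,v]`
is assumed to commute with `u`. -/
lemma pexp_mul_elt {u v w : PowerSeries B} (hu : constantCoeff u = 0)
    (hw0 : constantCoeff w = 0) (hc : u * w = w * u) (hw : u * v = v * u + w) :
    pexp u * v = (v + w) * pexp u := by
  ext N
  rw [coeff_pexp_mul hu N, add_mul]
  rw [map_add]
  rw [coeff_mul_pexp hu N, coeff_mul_pexp hu N]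
  rw [Finset.sum_range_succ' (fun k => ((k.factorial : ℂ)⁻¹) • coeff N (u ^ k * v)) N]
  have hterm : ∀ i, (((i+1).factorial : ℂ)⁻¹) • coeff N (u ^ (i+1) * v) =
      (((i+1).factorial : ℂ)⁻¹) • coeff N (v * u ^ (i+1))
        + ((i.factorial : ℂ)⁻¹) • coeff N (w * u ^ i) := by
    intro i
    rw [pow_mul_swap hc hw i, map_add, smul_add, map_nsmul]
    congr 1
    rw [smul_comm, ← Nat.cast_smul_eq_nsmul ℂ, smul_smul]
    congr 1
    push_cast
    rw [mul_comm]
    exact fact_inv_succ i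
  rw [Finset.sum_congr rfl (fun i _ => hterm i), Finset.sum_add_distrib]
  have h1 : ∑ i ∈ Finset.range N, (((i+1).factorial : ℂ)⁻¹) • coeff N (v * u ^ (i+1))
      + (((0 : ℕ).factorial : ℂ)⁻¹) • coeff N (u ^ 0 * v)
      = ∑ k ∈ Finset.range (N+1), ((k.factorial : ℂ)⁻¹) • coeff N (v * u ^ k) := by
    rw [Finset.sum_range_succ' (fun k => ((k.factorial : ℂ)⁻¹) • coeff N (v * u ^ k)) N]
    simp
  have h2 : ∑ i ∈ Finset.range N, ((i.factorial : ℂ)⁻¹) • coeff N (w * u ^ i)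
      = ∑ k ∈ Finset.range (N+1), ((k.factorial : ℂ)⁻¹) • coeff N (w * u ^ k) := by
    rw [Finset.sum_range_succ]
    have hwc : ∀ i < 1, coeff i w = 0 := by
      intro i hi
      obtain rfl : i = 0 := by omega
      simpa using hw0
    rw [ord_mul (m := 1) (n := N) hwc (ord_pow hu N) (by omega), smul_zero, add_zero]
  rw [add_right_comm, h1, h2]

lemma pexp_mul_pow {u v w : PowerSeries B} (hu : constantCoeff u = 0)
    (hw0 : constantCoeff w = 0) (hc : u * w = w * u) (hw : u * v = v * u + w) (k : ℕ) :
    pexp u * v ^ k = (v + w) ^ k * pexp u := by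
  induction k with
  | zero => simp
  | succ k ih =>
      rw [pow_succ', pow_succ', ← mul_assoc, pexp_mul_elt hu hw0 hc hw,
        mul_assoc, ih, ← mul_assoc]

/-- BCH-type commutation: `e^u e^v = e^{v+w} e^u` when `w = [u,v]` commutes with `u`. -/
lemma pexp_swap {u v w : PowerSeries B} (hu : constantCoeff u = 0)
    (hv : constantCoeff v = 0) (hw0 : constantCoeff w = 0)
    (hc : u * w = w * u) (hw : u * v = v * u + w) :
    pexp u * pexp v = pexp (v + w) * pexp u := by
  ext N
  rw [coeff_mul_pexp hv N, coeff_pexp_mul (by simp [map_add, hv, hw0]) N]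
  apply Finset.sum_congr rfl
  intro k _
  rw [pexp_mul_pow hu hw0 hc hw k]

lemma fact_choose_inv {m n : ℕ} (h : m ≤ n) :
    ((n.factorial : ℂ))⁻¹ * (n.choose m : ℂ) =
      ((m.factorial : ℂ))⁻¹ * (((n - m).factorial : ℂ))⁻¹ := by
  have key := Nat.choose_mul_factorial_mul_factorial h
  have hk : (n.choose m : ℂ) * (m.factorial : ℂ) * ((n - m).factorial : ℂ)
      = (n.factorial : ℂ) := by exact_mod_cast congrArg (Nat.cast : ℕ → ℂ) key
  have h1 : (m.factorial : ℂ) ≠ 0 := Nat.cast_ne_zero.2 (Nat.factorial_ne_zero m)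
  have h2 : ((n - m).factorial : ℂ) ≠ 0 := Nat.cast_ne_zero.2 (Nat.factorial_ne_zero _)
  have h3 : (n.factorial : ℂ) ≠ 0 := Nat.cast_ne_zero.2 (Nat.factorial_ne_zero _)
  field_simp
  linear_combination hk

/-- additivity of `pexp` on commuting elements -/
lemma pexp_add {u v : PowerSeries B} (hu : constantCoeff u = 0)
    (hv : constantCoeff v = 0) (h : Commute u v) :
    pexp (u + v) = pexp u * pexp v := by
  ext N
  -- RHS as a double sum
  have hrhs : coeff N (pexp u * pexp v) =
      ∑ p ∈ Finset.range (N+1) ×ˢ Finset.range (N+1),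
        (((p.1.factorial : ℂ))⁻¹ * ((p.2.factorial : ℂ))⁻¹) •
          coeff N (u ^ p.1 * v ^ p.2) := by
    rw [Finset.sum_product]
    rw [coeff_pexp_mul hu N]
    apply Finset.sum_congr rfl
    intro j _
    rw [coeff_mul_pexp hv N, Finset.smul_sum]
    apply Finset.sum_congr rfl
    intro k _
    rw [smul_smul]
  rw [hrhs]
  -- LHS as a triangular double sum
  have hlhs : coeff N (pexp (u + v)) =
      ∑ x ∈ (Finset.range (N+1)).sigma (fun n => Finset.range (n+1)),
        (((x.2.factorial : ℂ))⁻¹ * (((x.1 - x.2).factorial : ℂ))⁻¹) •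
          coeff N (u ^ x.2 * v ^ (x.1 - x.2)) := by
    rw [pexp, coeff_mk, Finset.sum_sigma]
    apply Finset.sum_congr rfl
    intro n _
    rw [h.add_pow]
    rw [map_sum, Finset.smul_sum]
    apply Finset.sum_congr rfl
    intro m hm
    rw [Finset.mem_range] at hm
    rw [← nsmul_eq_mul', map_nsmul, ← Nat.cast_smul_eq_nsmul ℂ, smul_smul,
      fact_choose_inv (by omega : m ≤ n)]
  rw [hlhs]
  -- reindex the triangle into the square
  rw [← Finset.sum_filter_of_ne (p := fun p : ℕ × ℕ => p.1 + p.2 ≤ N)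
    (fun p _ hne => by
      by_contra hgt
      exact hne (by
        rw [ord_mul (ord_pow hu p.1) (ord_pow hv p.2) (by omega), smul_zero]))]
  refine Finset.sum_nbij' (fun x => (x.2, x.1 - x.2)) (fun p => ⟨p.1 + p.2, p.1⟩)
    ?_ ?_ ?_ ?_ ?_
  · rintro ⟨n, m⟩ hx
    simp only [Finset.mem_sigma, Finset.mem_range] at hx
    simp only [Finset.mem_filter, Finset.mem_product, Finset.mem_range]
    omega
  · rintro ⟨a, b⟩ hp
    simp only [Finset.mem_filter, Finset.mem_product, Finset.mem_range] at hp
    simp only [Finset.mem_sigma, Finset.mem_range]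
    omega
  · rintro ⟨n, m⟩ hx
    simp only [Finset.mem_sigma, Finset.mem_range] at hx
    simp only [Sigma.mk.inj_iff]
    constructor
    · omega
    · exact heq_of_eq rfl
  · rintro ⟨a, b⟩ hp
    show (a, a + b - a) = (a, b)
    rw [Nat.add_sub_cancel_left]
  · rintro ⟨n, m⟩ hx
    rfl

lemma pexp_zero : pexp (0 : PowerSeries B) = 1 := by
  ext N
  rw [pexp, coeff_mk]
  rw [Finset.sum_eq_single 0]
  · simp
  · intro k _ hk
    rw [zero_pow hk, map_zero, smul_zero]
  · intro h
    simp at h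

lemma pexp_comm {u v : PowerSeries B} (hu : constantCoeff u = 0)
    (hv : constantCoeff v = 0) (h : Commute u v) :
    pexp u * pexp v = pexp v * pexp u := by
  rw [← pexp_add hu hv h, ← pexp_add hv hu h.symm, add_comm]

lemma pexp_neg_mul {u : PowerSeries B} (hu : constantCoeff u = 0) :
    pexp (-u) * pexp u = 1 := by
  rw [← pexp_add (by simp [hu]) hu (Commute.neg_left (Commute.refl u)), neg_add_cancel,
    pexp_zero]

/-- abstract form of the twist identity -/
theorem key {u v w u' τ : PowerSeries B}
    (h0u : constantCoeff u = 0) (h0v : constantCoeff v = 0)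
    (h0w : constantCoeff w = 0) (h0u' : constantCoeff u' = 0)
    (h0τ : constantCoeff τ = 0)
    (cuv : Commute u v) (cuw : Commute u w) (cuu' : Commute u u') (cuτ : Commute u τ)
    (cu'v : Commute u' v) (cu'w : Commute u' w) (cu'τ : Commute u' τ)
    (cvτ : Commute v τ) (cwτ : Commute w τ)
    (hcom : v * w = w * v + τ) :
    pexp (u + v) * pexp w = pexp (w + u') * pexp v * pexp ((u - u') + τ) := by
  have h0d : constantCoeff (u - u' + τ) = 0 := by simp [map_add, map_sub, h0u, h0u', h0τ]
  have swap : pexp v * pexp w = pexp w * pexp τ * pexp v := by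
    rw [pexp_swap h0v h0w h0τ cvτ.eq hcom, pexp_add h0w h0τ cwτ]
  calc pexp (u + v) * pexp w
      = pexp u * (pexp v * pexp w) := by rw [pexp_add h0u h0v cuv, mul_assoc]
    _ = (pexp u * pexp w) * (pexp τ * pexp v) := by rw [swap]; noncomm_ring
    _ = pexp w * (pexp u * (pexp τ * pexp v)) := by
        rw [pexp_comm h0u h0w cuw, mul_assoc]
    _ = pexp w * pexp (u + (τ + v)) := by
        congr 1
        rw [pexp_add h0u (by simp [map_add, h0τ, h0v] : constantCoeff (τ + v) = 0)
            (cuτ.add_right cuv), pexp_add h0τ h0v cvτ.symm]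
    _ = pexp w * pexp (u' + (v + (u - u' + τ))) := by
        congr 2
        abel
    _ = pexp (w + u') * pexp v * pexp ((u - u') + τ) := by
        rw [pexp_add h0u' (by simp [map_add, map_sub, h0v, h0u, h0u', h0τ] :
              constantCoeff (v + (u - u' + τ)) = 0)
            (cu'v.add_right ((cuu'.symm.sub_right (Commute.refl u')).add_right cu'τ)),
          pexp_add h0v h0d ((cuv.symm.sub_right cu'v.symm).add_right cvτ),
          pexp_add h0w h0u' cu'w.symm]
        noncomm_ring

variable {C : Type*} [Ring C] [Algebra ℂ C]

lemma pexp_map (f : B →ₐ[ℂ] C) (u : PowerSeries B) :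
    PowerSeries.map f.toRingHom (pexp u) = pexp (PowerSeries.map f.toRingHom u) := by
  ext N
  rw [PowerSeries.coeff_map, pexp, pexp, coeff_mk, coeff_mk, map_sum]
  apply Finset.sum_congr rfl
  intro k _
  rw [← map_pow, PowerSeries.coeff_map]
  show f _ = _
  rw [map_smul]
  rfl

lemma embC_map (f : B →ₐ[ℂ] C) (s : PowerSeries ℂ) :
    PowerSeries.map f.toRingHom (embC s) = embC s := by
  ext n
  rw [PowerSeries.coeff_map, embC, embC, PowerSeries.coeff_map, PowerSeries.coeff_map]
  exact f.commutes _

lemma map_embC_mul_C (f : B →ₐ[ℂ] C) (s : PowerSeries ℂ) (b : B) :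
    PowerSeries.map f.toRingHom (embC s * PowerSeries.C b)
      = embC s * PowerSeries.C (f b) := by
  rw [map_mul, embC_map, PowerSeries.map_C]
  rfl

lemma embC_commute (s : PowerSeries ℂ) (g : PowerSeries B) : Commute (embC s) g := by
  unfold Commute SemiconjBy
  ext n
  rw [PowerSeries.coeff_mul, PowerSeries.coeff_mul,
    ← Finset.Nat.sum_antidiagonal_swap
      (f := fun p => PowerSeries.coeff p.1 g * PowerSeries.coeff p.2 (embC s))]
  apply Finset.sum_congr rfl
  rintro ⟨i, j⟩ _
  show PowerSeries.coeff i (embC s) * _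
      = PowerSeries.coeff j g * PowerSeries.coeff i (embC s)
  rw [embC, PowerSeries.coeff_map]
  exact (Algebra.commutes _ _)

lemma embC_mul_C_mul (s s' : PowerSeries ℂ) (b b' : B) :
    (embC s * PowerSeries.C b) * (embC s' * PowerSeries.C b')
      = embC (s * s') * PowerSeries.C (b * b') := by
  have h1 : embC (s * s') = (embC s : PowerSeries B) * embC s' := map_mul _ _ _
  have h2 : PowerSeries.C (b * b') = PowerSeries.C b * PowerSeries.C b' := map_mul _ _ _
  rw [h1, h2, mul_assoc, ← mul_assoc (PowerSeries.C b),
    ← (embC_commute s' (PowerSeries.C b)).eq, mul_assoc (embC s'), ← mul_assoc,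
    ← mul_assoc]

lemma constantCoeff_embC_mul_C {s : PowerSeries ℂ}
    (hs : PowerSeries.constantCoeff s = 0) (b : B) :
    PowerSeries.constantCoeff (embC s * PowerSeries.C b) = 0 := by
  rw [map_mul, ← PowerSeries.coeff_zero_eq_constantCoeff_apply, embC, PowerSeries.coeff_map,
    PowerSeries.coeff_zero_eq_constantCoeff_apply, hs, map_zero, zero_mul]

lemma commute_embC_C {a b : PowerSeries ℂ} {U V : B} (h : U * V = V * U) :
    Commute (embC a * PowerSeries.C U) (embC b * PowerSeries.C V) := by
  unfold Commute SemiconjBy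
  rw [embC_mul_C_mul, embC_mul_C_mul, h, mul_comm a b]

end Aux

/-- The twist identity `(Δ⊗id)(F_θ⁻¹)·(F_{θ'}⁻¹⊗1) = (id⊗Δ)(F_{θ'}⁻¹)·(1⊗F_θ⁻¹)·Φ_{θ,θ'}`
for `F_θ = exp(θ p⊗q)` and `Φ_{θ,θ'} = exp(−p⊗(θ−θ'−θθ't)⊗q)`, in the universal
enveloping algebra of the Heisenberg Lie algebra (`H` a ℂ-algebra with primitive elements
`p, q, t` satisfying `[p,q] = t` and `t` central, `Δ` the coproduct). -/
theorem stmt2 {H : Type*} [Ring H] [Algebra ℂ H]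
    (Δ : H →ₐ[ℂ] H ⊗[ℂ] H) (p q t : H)
    (hpq : p * q - q * p = t) (ht : ∀ x : H, Commute t x)
    (hΔp : Δ p = p ⊗ₜ[ℂ] 1 + 1 ⊗ₜ[ℂ] p) (hΔq : Δ q = q ⊗ₜ[ℂ] 1 + 1 ⊗ₜ[ℂ] q)
    (hΔt : Δ t = t ⊗ₜ[ℂ] 1 + 1 ⊗ₜ[ℂ] t)
    (θ θ' : PowerSeries ℂ)
    (hθ : PowerSeries.constantCoeff θ = 0) (hθ' : PowerSeries.constantCoeff θ' = 0)
    (Dl Dr i12 i23 : (H ⊗[ℂ] H) →ₐ[ℂ] H ⊗[ℂ] (H ⊗[ℂ] H))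
    (hDl : Dl = (Algebra.TensorProduct.assoc ℂ ℂ ℂ H H H).toAlgHom.comp
      (Algebra.TensorProduct.map Δ (AlgHom.id ℂ H)))
    (hDr : Dr = Algebra.TensorProduct.map (AlgHom.id ℂ H) Δ)
    (hi12 : i12 = Algebra.TensorProduct.map (AlgHom.id ℂ H) Algebra.TensorProduct.includeLeft)
    (hi23 : i23 = Algebra.TensorProduct.includeRight) :
    PowerSeries.map Dl.toRingHom
        (pexp (embC (-θ) * PowerSeries.C (p ⊗ₜ[ℂ] q))) *
      PowerSeries.map i12.toRingHom
        (pexp (embC (-θ') * PowerSeries.C (p ⊗ₜ[ℂ] q))) =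
    PowerSeries.map Dr.toRingHom
        (pexp (embC (-θ') * PowerSeries.C (p ⊗ₜ[ℂ] q))) *
      PowerSeries.map i23.toRingHom
        (pexp (embC (-θ) * PowerSeries.C (p ⊗ₜ[ℂ] q))) *
      pexp (embC (θ' - θ) * PowerSeries.C (p ⊗ₜ[ℂ] ((1 : H) ⊗ₜ[ℂ] q))
        + embC (θ * θ') * PowerSeries.C (p ⊗ₜ[ℂ] (t ⊗ₜ[ℂ] q))) := by
  set X : H ⊗[ℂ] (H ⊗[ℂ] H) := p ⊗ₜ[ℂ] ((1 : H) ⊗ₜ[ℂ] q) with hX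
  set Y : H ⊗[ℂ] (H ⊗[ℂ] H) := (1 : H) ⊗ₜ[ℂ] (p ⊗ₜ[ℂ] q) with hY
  set Z : H ⊗[ℂ] (H ⊗[ℂ] H) := p ⊗ₜ[ℂ] (q ⊗ₜ[ℂ] (1 : H)) with hZ
  set T : H ⊗[ℂ] (H ⊗[ℂ] H) := p ⊗ₜ[ℂ] (t ⊗ₜ[ℂ] q) with hT
  have hDlv : Dl (p ⊗ₜ[ℂ] q) = X + Y := by
    rw [hDl]; simp [hΔp, TensorProduct.add_tmul, hX, hY]
  have hi12v : i12 (p ⊗ₜ[ℂ] q) = Z := by rw [hi12]; simp [hZ]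
  have hDrv : Dr (p ⊗ₜ[ℂ] q) = Z + X := by
    rw [hDr]; simp [hΔq, TensorProduct.tmul_add, hX, hZ]
  have hi23v : i23 (p ⊗ₜ[ℂ] q) = Y := by rw [hi23]; simp [hY]
  rw [pexp_map, pexp_map, pexp_map, pexp_map, map_embC_mul_C, map_embC_mul_C,
    map_embC_mul_C, map_embC_mul_C, hDlv, hi12v, hDrv, hi23v]
  -- commutation facts in the triple tensor product
  have hXY : X * Y = Y * X := by
    simp [hX, hY, Algebra.TensorProduct.tmul_mul_tmul]
  have hXZ : X * Z = Z * X := by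
    simp [hX, hZ, Algebra.TensorProduct.tmul_mul_tmul]
  have hXT : X * T = T * X := by
    simp [hX, hT, Algebra.TensorProduct.tmul_mul_tmul, (ht q).eq]
  have hYT : Y * T = T * Y := by
    simp [hY, hT, Algebra.TensorProduct.tmul_mul_tmul, (ht p).eq, (ht q).eq]
  have hZT : Z * T = T * Z := by
    simp [hZ, hT, Algebra.TensorProduct.tmul_mul_tmul, (ht p).eq, (ht q).eq]
  have hYZ : Y * Z = Z * Y + T := by
    have hpq' : p * q = q * p + t := by rw [← hpq]; noncomm_ring
    simp only [hY, hZ, hT, Algebra.TensorProduct.tmul_mul_tmul, one_mul, mul_one, hpq',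
      TensorProduct.add_tmul, TensorProduct.tmul_add]
  -- constant coefficient facts
  have h0θ : PowerSeries.constantCoeff (-θ) = 0 := by rw [map_neg, hθ, neg_zero]
  have h0θ' : PowerSeries.constantCoeff (-θ') = 0 := by rw [map_neg, hθ', neg_zero]
  have h0θθ' : PowerSeries.constantCoeff (θ * θ') = 0 := by rw [map_mul, hθ, zero_mul]
  -- rewrite the arguments into the shape of `key`
  have e1 : embC (-θ) * PowerSeries.C (X + Y)
      = embC (-θ) * PowerSeries.C X + embC (-θ) * PowerSeries.C Y := by
    rw [map_add, mul_add]
  have e2 : embC (-θ') * PowerSeries.C (Z + X)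
      = embC (-θ') * PowerSeries.C Z + embC (-θ') * PowerSeries.C X := by
    rw [map_add, mul_add]
  have e3 : embC (θ' - θ) * PowerSeries.C X + embC (θ * θ') * PowerSeries.C T
      = ((embC (-θ) * PowerSeries.C X - embC (-θ') * PowerSeries.C X)
          + embC (θ * θ') * PowerSeries.C T) := by
    congr 1
    rw [← sub_mul]
    congr 1
    show PowerSeries.map _ _ = PowerSeries.map _ _ - PowerSeries.map _ _
    rw [← map_sub]
    congr 1
    ring
  rw [e1, e2, e3]
  exact key
    (constantCoeff_embC_mul_C h0θ X) (constantCoeff_embC_mul_C h0θ Y)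
    (constantCoeff_embC_mul_C h0θ' Z) (constantCoeff_embC_mul_C h0θ' X)
    (constantCoeff_embC_mul_C h0θθ' T)
    (commute_embC_C hXY) (commute_embC_C hXZ) (commute_embC_C (rfl)) (commute_embC_C hXT)
    (commute_embC_C hXY) (commute_embC_C hXZ) (commute_embC_C hXT)
    (commute_embC_C hYT) (commute_embC_C hZT)
    (by rw [embC_mul_C_mul, embC_mul_C_mul, hYZ, map_add, mul_add, neg_mul_neg,
      neg_mul_neg, mul_comm θ' θ])
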